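/- Let (F, m, η; δ, ε) be a (proper) Frobenius monad on B, i.e., (F, m, η) a monad, (F, δ, ε) a comonad, satisfying the Frobenius property. Then the category of unital F-modules, the category of counital F-comodules, and the category of unital-and-counital Frobenius F-bimodules are pairwise isomorphic, via (B, ϱ) ↦ (B, ϱ, F(ϱ)·δ_B·η_B) and (B, ω) ↦ (B, ε_B·m_B·F(ω), ω), with the forgetful functors as inverses. -/

import Mathlib

open CategoryTheory

universe v u

section

variable {B : Type u} [Category.{v} B]

/-- A unital module over the monad `(F, m, η)`. -/
structure UMod (F : B ⥤ B) (m : F ⋙ F ⟶ F) (η : 𝟭 B ⟶ F) where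
  pt : B
  act : F.obj pt ⟶ pt
  massoc : F.map act ≫ act = m.app pt ≫ act
  unital : η.app pt ≫ act = 𝟙 pt

instance (F : B ⥤ B) (m : F ⋙ F ⟶ F) (η : 𝟭 B ⟶ F) : Category (UMod F m η) where
  Hom X Y := {f : X.pt ⟶ Y.pt // F.map f ≫ Y.act = X.act ≫ f}
  id X := ⟨𝟙 X.pt, by simp⟩
  comp {X Y Z} f g := ⟨f.1 ≫ g.1, by
    rw [F.map_comp, Category.assoc, g.2, ← Category.assoc, f.2, Category.assoc]⟩
  id_comp f := Subtype.ext (Category.id_comp f.1)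
  comp_id f := Subtype.ext (Category.comp_id f.1)
  assoc f g h := Subtype.ext (Category.assoc f.1 g.1 h.1)

/-- A counital comodule over the comonad `(F, δ, ε)`. -/
structure CComod (F : B ⥤ B) (δ : F ⟶ F ⋙ F) (ε : F ⟶ 𝟭 B) where
  pt : B
  co : pt ⟶ F.obj pt
  coassoc : co ≫ F.map co = co ≫ δ.app pt
  counital : co ≫ ε.app pt = 𝟙 pt

instance (F : B ⥤ B) (δ : F ⟶ F ⋙ F) (ε : F ⟶ 𝟭 B) : Category (CComod F δ ε) where
  Hom X Y := {f : X.pt ⟶ Y.pt // X.co ≫ F.map f = f ≫ Y.co}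
  id X := ⟨𝟙 X.pt, by simp⟩
  comp {X Y Z} f g := ⟨f.1 ≫ g.1, by
    rw [F.map_comp, ← Category.assoc, f.2, Category.assoc, g.2, ← Category.assoc]⟩
  id_comp f := Subtype.ext (Category.id_comp f.1)
  comp_id f := Subtype.ext (Category.comp_id f.1)
  assoc f g h := Subtype.ext (Category.assoc f.1 g.1 h.1)

/-- A unital-and-counital Frobenius `F`-bimodule. -/
structure UCFrobBimod (F : B ⥤ B) (m : F ⋙ F ⟶ F) (η : 𝟭 B ⟶ F)
    (δ : F ⟶ F ⋙ F) (ε : F ⟶ 𝟭 B) where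
  pt : B
  act : F.obj pt ⟶ pt
  co : pt ⟶ F.obj pt
  massoc : F.map act ≫ act = m.app pt ≫ act
  coassoc : co ≫ F.map co = co ≫ δ.app pt
  unital : η.app pt ≫ act = 𝟙 pt
  counital : co ≫ ε.app pt = 𝟙 pt
  frob₁ : δ.app pt ≫ F.map act = act ≫ co
  frob₂ : F.map co ≫ m.app pt = act ≫ co

instance (F : B ⥤ B) (m : F ⋙ F ⟶ F) (η : 𝟭 B ⟶ F) (δ : F ⟶ F ⋙ F) (ε : F ⟶ 𝟭 B) :
    Category (UCFrobBimod F m η δ ε) where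
  Hom X Y := {f : X.pt ⟶ Y.pt //
    F.map f ≫ Y.act = X.act ≫ f ∧ X.co ≫ F.map f = f ≫ Y.co}
  id X := ⟨𝟙 X.pt, by simp, by simp⟩
  comp {X Y Z} f g := ⟨f.1 ≫ g.1,
    by rw [F.map_comp, Category.assoc, g.2.1, ← Category.assoc, f.2.1, Category.assoc],
    by rw [F.map_comp, ← Category.assoc, f.2.2, Category.assoc, g.2.2, ← Category.assoc]⟩
  id_comp f := Subtype.ext (Category.id_comp f.1)
  comp_id f := Subtype.ext (Category.comp_id f.1)
  assoc f g h := Subtype.ext (Category.assoc f.1 g.1 h.1)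

/-- Forgetful functor to unital modules. -/
def forgetToUMod (F : B ⥤ B) (m : F ⋙ F ⟶ F) (η : 𝟭 B ⟶ F)
    (δ : F ⟶ F ⋙ F) (ε : F ⟶ 𝟭 B) : UCFrobBimod F m η δ ε ⥤ UMod F m η where
  obj X := ⟨X.pt, X.act, X.massoc, X.unital⟩
  map f := ⟨f.1, f.2.1⟩

/-- Forgetful functor to counital comodules. -/
def forgetToCComod (F : B ⥤ B) (m : F ⋙ F ⟶ F) (η : 𝟭 B ⟶ F)
    (δ : F ⟶ F ⋙ F) (ε : F ⟶ 𝟭 B) : UCFrobBimod F m η δ ε ⥤ CComod F δ ε where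
  obj X := ⟨X.pt, X.co, X.coassoc, X.counital⟩
  map f := ⟨f.1, f.2.2⟩

section Aux

variable (F : B ⥤ B) (m : F ⋙ F ⟶ F) (η : 𝟭 B ⟶ F) (δ : F ⟶ F ⋙ F) (ε : F ⟶ 𝟭 B)

lemma aux_mod_frob₁
    (unit₂ : ∀ X : B, η.app (F.obj X) ≫ m.app X = 𝟙 (F.obj X))
    (frob₁ : ∀ X : B, m.app X ≫ δ.app X = δ.app (F.obj X) ≫ F.map (m.app X))
    (X : UMod F m η) :
    δ.app X.pt ≫ F.map X.act = X.act ≫ (η.app X.pt ≫ δ.app X.pt ≫ F.map X.act) := by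
  have hη : X.act ≫ η.app X.pt = η.app (F.obj X.pt) ≫ F.map X.act := by
    simpa using η.naturality X.act
  have hδ : F.map X.act ≫ δ.app X.pt
      = δ.app (F.obj X.pt) ≫ F.map (F.map X.act) := by
    simpa using δ.naturality X.act
  symm
  rw [reassoc_of% hη, reassoc_of% hδ, ← F.map_comp, X.massoc, F.map_comp,
    ← reassoc_of% (frob₁ X.pt), reassoc_of% (unit₂ X.pt)]

lemma aux_mod_counital
    (counit₂ : ∀ X : B, δ.app X ≫ ε.app (F.obj X) = 𝟙 (F.obj X))
    (X : UMod F m η) :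
    (η.app X.pt ≫ δ.app X.pt ≫ F.map X.act) ≫ ε.app X.pt = 𝟙 X.pt := by
  have hε : F.map X.act ≫ ε.app X.pt = ε.app (F.obj X.pt) ≫ X.act := by
    simpa using ε.naturality X.act
  rw [Category.assoc, Category.assoc, hε, reassoc_of% (counit₂ X.pt), X.unital]

lemma aux_mod_frob₂
    (unit₁ : ∀ X : B, F.map (η.app X) ≫ m.app X = 𝟙 (F.obj X))
    (unit₂ : ∀ X : B, η.app (F.obj X) ≫ m.app X = 𝟙 (F.obj X))
    (frob₁ : ∀ X : B, m.app X ≫ δ.app X = δ.app (F.obj X) ≫ F.map (m.app X))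
    (frob₂ : ∀ X : B, m.app X ≫ δ.app X = F.map (δ.app X) ≫ m.app (F.obj X))
    (X : UMod F m η) :
    F.map (η.app X.pt ≫ δ.app X.pt ≫ F.map X.act) ≫ m.app X.pt
      = X.act ≫ (η.app X.pt ≫ δ.app X.pt ≫ F.map X.act) := by
  have hm : F.map (F.map X.act) ≫ m.app X.pt = m.app (F.obj X.pt) ≫ F.map X.act := by
    simpa using m.naturality X.act
  rw [F.map_comp, F.map_comp, Category.assoc, Category.assoc, hm,
    ← reassoc_of% (frob₂ X.pt), reassoc_of% (unit₁ X.pt)]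
  exact aux_mod_frob₁ F m η δ unit₂ frob₁ X

lemma aux_mod_coassoc
    (unit₂ : ∀ X : B, η.app (F.obj X) ≫ m.app X = 𝟙 (F.obj X))
    (coassoc : ∀ X : B, δ.app X ≫ F.map (δ.app X) = δ.app X ≫ δ.app (F.obj X))
    (frob₁ : ∀ X : B, m.app X ≫ δ.app X = δ.app (F.obj X) ≫ F.map (m.app X))
    (X : UMod F m η) :
    (η.app X.pt ≫ δ.app X.pt ≫ F.map X.act) ≫ F.map (η.app X.pt ≫ δ.app X.pt ≫ F.map X.act)
      = (η.app X.pt ≫ δ.app X.pt ≫ F.map X.act) ≫ δ.app X.pt := by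
  have hδ : F.map X.act ≫ δ.app X.pt
      = δ.app (F.obj X.pt) ≫ F.map (F.map X.act) := by
    simpa using δ.naturality X.act
  have h1 := aux_mod_frob₁ F m η δ unit₂ frob₁ X
  conv_rhs => rw [Category.assoc, Category.assoc, hδ, ← reassoc_of% (coassoc X.pt),
    ← F.map_comp, h1, F.map_comp]
  simp

lemma aux_mod_hom (X Y : UMod F m η) (f : X.pt ⟶ Y.pt)
    (hf : F.map f ≫ Y.act = X.act ≫ f) :
    (η.app X.pt ≫ δ.app X.pt ≫ F.map X.act) ≫ F.map f
      = f ≫ (η.app Y.pt ≫ δ.app Y.pt ≫ F.map Y.act) := by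
  have hη : f ≫ η.app Y.pt = η.app X.pt ≫ F.map f := by
    simpa using η.naturality f
  have hδ : F.map f ≫ δ.app Y.pt = δ.app X.pt ≫ F.map (F.map f) := by
    simpa using δ.naturality f
  rw [reassoc_of% hη, reassoc_of% hδ, ← F.map_comp, hf, F.map_comp]
  simp

lemma aux_com_frob₂
    (counit₂ : ∀ X : B, δ.app X ≫ ε.app (F.obj X) = 𝟙 (F.obj X))
    (frob₂ : ∀ X : B, m.app X ≫ δ.app X = F.map (δ.app X) ≫ m.app (F.obj X))
    (Y : CComod F δ ε) :
    F.map Y.co ≫ m.app Y.pt = (F.map Y.co ≫ m.app Y.pt ≫ ε.app Y.pt) ≫ Y.co := by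
  have hε : ε.app Y.pt ≫ Y.co = F.map Y.co ≫ ε.app (F.obj Y.pt) := by
    simpa using (ε.naturality Y.co).symm
  have hm : m.app Y.pt ≫ F.map Y.co = F.map (F.map Y.co) ≫ m.app (F.obj Y.pt) := by
    simpa using (m.naturality Y.co).symm
  symm
  simp only [Category.assoc]
  rw [hε, reassoc_of% hm, ← F.map_comp_assoc, Y.coassoc, F.map_comp_assoc,
    ← reassoc_of% (frob₂ Y.pt), counit₂ Y.pt]
  simp

lemma aux_com_unital
    (unit₂ : ∀ X : B, η.app (F.obj X) ≫ m.app X = 𝟙 (F.obj X))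
    (Y : CComod F δ ε) :
    η.app Y.pt ≫ F.map Y.co ≫ m.app Y.pt ≫ ε.app Y.pt = 𝟙 Y.pt := by
  have hη : Y.co ≫ η.app (F.obj Y.pt) = η.app Y.pt ≫ F.map Y.co := by
    simpa using η.naturality Y.co
  rw [← reassoc_of% hη, reassoc_of% (unit₂ Y.pt), Y.counital]

lemma aux_com_frob₁
    (counit₁ : ∀ X : B, δ.app X ≫ F.map (ε.app X) = 𝟙 (F.obj X))
    (counit₂ : ∀ X : B, δ.app X ≫ ε.app (F.obj X) = 𝟙 (F.obj X))
    (frob₁ : ∀ X : B, m.app X ≫ δ.app X = δ.app (F.obj X) ≫ F.map (m.app X))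
    (frob₂ : ∀ X : B, m.app X ≫ δ.app X = F.map (δ.app X) ≫ m.app (F.obj X))
    (Y : CComod F δ ε) :
    δ.app Y.pt ≫ F.map (F.map Y.co ≫ m.app Y.pt ≫ ε.app Y.pt)
      = (F.map Y.co ≫ m.app Y.pt ≫ ε.app Y.pt) ≫ Y.co := by
  have hδ : δ.app Y.pt ≫ F.map (F.map Y.co) = F.map Y.co ≫ δ.app (F.obj Y.pt) := by
    simpa using (δ.naturality Y.co).symm
  rw [F.map_comp, F.map_comp, ← Category.assoc, hδ, Category.assoc,
    ← reassoc_of% (frob₁ Y.pt), Category.assoc, counit₁ Y.pt, Category.comp_id]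
  simpa only [Category.assoc] using aux_com_frob₂ F m δ ε counit₂ frob₂ Y

lemma aux_com_massoc
    (massoc : ∀ X : B, F.map (m.app X) ≫ m.app X = m.app (F.obj X) ≫ m.app X)
    (counit₂ : ∀ X : B, δ.app X ≫ ε.app (F.obj X) = 𝟙 (F.obj X))
    (frob₂ : ∀ X : B, m.app X ≫ δ.app X = F.map (δ.app X) ≫ m.app (F.obj X))
    (Y : CComod F δ ε) :
    F.map (F.map Y.co ≫ m.app Y.pt ≫ ε.app Y.pt) ≫ (F.map Y.co ≫ m.app Y.pt ≫ ε.app Y.pt)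
      = m.app Y.pt ≫ (F.map Y.co ≫ m.app Y.pt ≫ ε.app Y.pt) := by
  have hm : m.app Y.pt ≫ F.map Y.co = F.map (F.map Y.co) ≫ m.app (F.obj Y.pt) := by
    simpa using (m.naturality Y.co).symm
  have h1 := aux_com_frob₂ F m δ ε counit₂ frob₂ Y
  conv_rhs => rw [reassoc_of% hm, ← reassoc_of% (massoc Y.pt),
    ← F.map_comp_assoc, h1, F.map_comp_assoc]
  try simp

lemma aux_com_hom (X Y : CComod F δ ε) (f : X.pt ⟶ Y.pt)
    (hf : X.co ≫ F.map f = f ≫ Y.co) :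
    F.map f ≫ (F.map Y.co ≫ m.app Y.pt ≫ ε.app Y.pt)
      = (F.map X.co ≫ m.app X.pt ≫ ε.app X.pt) ≫ f := by
  have hm : m.app X.pt ≫ F.map f = F.map (F.map f) ≫ m.app Y.pt := by
    simpa using (m.naturality f).symm
  have hε : ε.app X.pt ≫ f = F.map f ≫ ε.app Y.pt := by
    simpa using (ε.naturality f).symm
  rw [← F.map_comp_assoc, ← hf, F.map_comp_assoc, ← reassoc_of% hm, ← hε]
  simp

/-- The functor from unital modules to Frobenius bimodules. -/
def PhiFunctor
    (unit₁ : ∀ X : B, F.map (η.app X) ≫ m.app X = 𝟙 (F.obj X))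
    (unit₂ : ∀ X : B, η.app (F.obj X) ≫ m.app X = 𝟙 (F.obj X))
    (coassoc : ∀ X : B, δ.app X ≫ F.map (δ.app X) = δ.app X ≫ δ.app (F.obj X))
    (counit₂ : ∀ X : B, δ.app X ≫ ε.app (F.obj X) = 𝟙 (F.obj X))
    (frob₁ : ∀ X : B, m.app X ≫ δ.app X = δ.app (F.obj X) ≫ F.map (m.app X))
    (frob₂ : ∀ X : B, m.app X ≫ δ.app X = F.map (δ.app X) ≫ m.app (F.obj X)) :
    UMod F m η ⥤ UCFrobBimod F m η δ ε where
  obj X :=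
    { pt := X.pt
      act := X.act
      co := η.app X.pt ≫ δ.app X.pt ≫ F.map X.act
      massoc := X.massoc
      coassoc := by
        simpa using aux_mod_coassoc F m η δ unit₂ coassoc frob₁ X
      unital := X.unital
      counital := aux_mod_counital F m η δ ε counit₂ X
      frob₁ := aux_mod_frob₁ F m η δ unit₂ frob₁ X
      frob₂ := aux_mod_frob₂ F m η δ unit₁ unit₂ frob₁ frob₂ X }
  map {X Y} f := ⟨f.1, f.2, aux_mod_hom F m η δ X Y f.1 f.2⟩
  map_id X := Subtype.ext rfl
  map_comp f g := Subtype.ext rfl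

/-- The functor from counital comodules to Frobenius bimodules. -/
def PsiFunctor
    (massoc : ∀ X : B, F.map (m.app X) ≫ m.app X = m.app (F.obj X) ≫ m.app X)
    (unit₂ : ∀ X : B, η.app (F.obj X) ≫ m.app X = 𝟙 (F.obj X))
    (counit₁ : ∀ X : B, δ.app X ≫ F.map (ε.app X) = 𝟙 (F.obj X))
    (counit₂ : ∀ X : B, δ.app X ≫ ε.app (F.obj X) = 𝟙 (F.obj X))
    (frob₁ : ∀ X : B, m.app X ≫ δ.app X = δ.app (F.obj X) ≫ F.map (m.app X))
    (frob₂ : ∀ X : B, m.app X ≫ δ.app X = F.map (δ.app X) ≫ m.app (F.obj X)) :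
    CComod F δ ε ⥤ UCFrobBimod F m η δ ε where
  obj Y :=
    { pt := Y.pt
      act := F.map Y.co ≫ m.app Y.pt ≫ ε.app Y.pt
      co := Y.co
      massoc := by
        simpa using aux_com_massoc F m δ ε massoc counit₂ frob₂ Y
      coassoc := Y.coassoc
      unital := by simpa using aux_com_unital F m η δ ε unit₂ Y
      counital := Y.counital
      frob₁ := aux_com_frob₁ F m δ ε counit₁ counit₂ frob₁ frob₂ Y
      frob₂ := by simpa using aux_com_frob₂ F m δ ε counit₂ frob₂ Y }
  map {X Y} f := ⟨f.1, aux_com_hom F m δ ε X Y f.1 f.2, f.2⟩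
  map_id X := Subtype.ext rfl
  map_comp f g := Subtype.ext rfl

lemma aux_bimod_eq (Z W : UCFrobBimod F m η δ ε) (hpt : Z.pt = W.pt)
    (hact : HEq Z.act W.act) (hco : HEq Z.co W.co) : Z = W := by
  obtain ⟨zp, za, zc, _, _, _, _, _, _⟩ := Z
  obtain ⟨wp, wa, wc, _, _, _, _, _, _⟩ := W
  dsimp at hpt hact hco
  subst hpt
  cases hact
  cases hco
  rfl

lemma aux_bimod_co (Z : UCFrobBimod F m η δ ε) :
    η.app Z.pt ≫ δ.app Z.pt ≫ F.map Z.act = Z.co := by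
  rw [Z.frob₁, ← Category.assoc, Z.unital]
  simp

lemma aux_bimod_act (Z : UCFrobBimod F m η δ ε) :
    F.map Z.co ≫ m.app Z.pt ≫ ε.app Z.pt = Z.act := by
  rw [← Category.assoc, Z.frob₂, Category.assoc, Z.counital, Category.comp_id]

lemma aux_eqToHom_val {Z W : UCFrobBimod F m η δ ε} (h : Z = W) :
    (eqToHom h).1 = eqToHom (congrArg UCFrobBimod.pt h) := by
  subst h; rfl

lemma aux_bimod_comp_val {X Y Z : UCFrobBimod F m η δ ε} (f : X ⟶ Y) (g : Y ⟶ Z) :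
    (f ≫ g).1 = f.1 ≫ g.1 := rfl

end Aux

/-- For a (proper) Frobenius monad `(F, m, η; δ, ε)`, the
categories of unital `F`-modules, counital `F`-comodules, and unital-and-counital
Frobenius `F`-bimodules are pairwise isomorphic via
`(B,ϱ) ↦ (B, ϱ, F(ϱ)·δ·η)` and `(B,ω) ↦ (B, ε·m·F(ω), ω)`, with the forgetful
functors as inverses. -/
theorem frobenius_monad_module_comodule_bimodule_iso
    (F : B ⥤ B) (m : F ⋙ F ⟶ F) (η : 𝟭 B ⟶ F) (δ : F ⟶ F ⋙ F) (ε : F ⟶ 𝟭 B)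
    -- monad
    (massoc : ∀ X : B, F.map (m.app X) ≫ m.app X = m.app (F.obj X) ≫ m.app X)
    (unit₁ : ∀ X : B, F.map (η.app X) ≫ m.app X = 𝟙 (F.obj X))
    (unit₂ : ∀ X : B, η.app (F.obj X) ≫ m.app X = 𝟙 (F.obj X))
    -- comonad
    (coassoc : ∀ X : B, δ.app X ≫ F.map (δ.app X) = δ.app X ≫ δ.app (F.obj X))
    (counit₁ : ∀ X : B, δ.app X ≫ F.map (ε.app X) = 𝟙 (F.obj X))
    (counit₂ : ∀ X : B, δ.app X ≫ ε.app (F.obj X) = 𝟙 (F.obj X))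
    -- Frobenius property
    (frob₁ : ∀ X : B, m.app X ≫ δ.app X = δ.app (F.obj X) ≫ F.map (m.app X))
    (frob₂ : ∀ X : B, m.app X ≫ δ.app X = F.map (δ.app X) ≫ m.app (F.obj X)) :
    -- each unital module gives a unital-and-counital Frobenius bimodule
    (∀ X : UMod F m η,
      ((η.app X.pt ≫ δ.app X.pt ≫ F.map X.act) ≫ F.map (η.app X.pt ≫ δ.app X.pt ≫ F.map X.act)
          = (η.app X.pt ≫ δ.app X.pt ≫ F.map X.act) ≫ δ.app X.pt) ∧
      ((η.app X.pt ≫ δ.app X.pt ≫ F.map X.act) ≫ ε.app X.pt = 𝟙 X.pt) ∧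
      (δ.app X.pt ≫ F.map X.act = X.act ≫ (η.app X.pt ≫ δ.app X.pt ≫ F.map X.act)) ∧
      (F.map (η.app X.pt ≫ δ.app X.pt ≫ F.map X.act) ≫ m.app X.pt
          = X.act ≫ (η.app X.pt ≫ δ.app X.pt ≫ F.map X.act))) ∧
    -- each counital comodule gives a unital-and-counital Frobenius bimodule
    (∀ Y : CComod F δ ε,
      (F.map (F.map Y.co ≫ m.app Y.pt ≫ ε.app Y.pt) ≫ (F.map Y.co ≫ m.app Y.pt ≫ ε.app Y.pt)
          = m.app Y.pt ≫ (F.map Y.co ≫ m.app Y.pt ≫ ε.app Y.pt)) ∧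
      (η.app Y.pt ≫ F.map Y.co ≫ m.app Y.pt ≫ ε.app Y.pt = 𝟙 Y.pt) ∧
      (δ.app Y.pt ≫ F.map (F.map Y.co ≫ m.app Y.pt ≫ ε.app Y.pt)
          = (F.map Y.co ≫ m.app Y.pt ≫ ε.app Y.pt) ≫ Y.co) ∧
      (F.map Y.co ≫ m.app Y.pt = (F.map Y.co ≫ m.app Y.pt ≫ ε.app Y.pt) ≫ Y.co)) ∧
    -- the categories are isomorphic, with the forgetful functors as inverses
    (∃ Φ : UMod F m η ⥤ UCFrobBimod F m η δ ε,
      Φ ⋙ forgetToUMod F m η δ ε = 𝟭 (UMod F m η) ∧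
      forgetToUMod F m η δ ε ⋙ Φ = 𝟭 (UCFrobBimod F m η δ ε) ∧
      ∀ X : UMod F m η,
        (forgetToUMod F m η δ ε).obj (Φ.obj X) = X ∧
        HEq (Φ.obj X).co (η.app X.pt ≫ δ.app X.pt ≫ F.map X.act)) ∧
    (∃ Ψ : CComod F δ ε ⥤ UCFrobBimod F m η δ ε,
      Ψ ⋙ forgetToCComod F m η δ ε = 𝟭 (CComod F δ ε) ∧
      forgetToCComod F m η δ ε ⋙ Ψ = 𝟭 (UCFrobBimod F m η δ ε) ∧
      ∀ Y : CComod F δ ε,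
        (forgetToCComod F m η δ ε).obj (Ψ.obj Y) = Y ∧
        HEq (Ψ.obj Y).act (F.map Y.co ≫ m.app Y.pt ≫ ε.app Y.pt)) := by
  refine ⟨fun X => ⟨aux_mod_coassoc F m η δ unit₂ coassoc frob₁ X,
      aux_mod_counital F m η δ ε counit₂ X,
      aux_mod_frob₁ F m η δ unit₂ frob₁ X,
      aux_mod_frob₂ F m η δ unit₁ unit₂ frob₁ frob₂ X⟩,
    fun Y => ⟨aux_com_massoc F m δ ε massoc counit₂ frob₂ Y,
      aux_com_unital F m η δ ε unit₂ Y,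
      aux_com_frob₁ F m δ ε counit₁ counit₂ frob₁ frob₂ Y,
      aux_com_frob₂ F m δ ε counit₂ frob₂ Y⟩,
    ⟨PhiFunctor F m η δ ε unit₁ unit₂ coassoc counit₂ frob₁ frob₂, rfl, ?_,
      fun X => ⟨rfl, heq_of_eq rfl⟩⟩,
    ⟨PsiFunctor F m η δ ε massoc unit₂ counit₁ counit₂ frob₁ frob₂, rfl, ?_,
      fun Y => ⟨rfl, heq_of_eq rfl⟩⟩⟩
  · refine CategoryTheory.Functor.ext (fun Z => aux_bimod_eq F m η δ ε _ _ rfl (heq_of_eq rfl)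
      (heq_of_eq (aux_bimod_co F m η δ ε Z))) ?_
    intro X Y f
    apply Subtype.ext
    simp [aux_eqToHom_val, aux_bimod_comp_val, PhiFunctor, forgetToUMod]
    erw [aux_eqToHom_val, aux_eqToHom_val]; simp
  · refine CategoryTheory.Functor.ext (fun Z => aux_bimod_eq F m η δ ε _ _ rfl
      (heq_of_eq (aux_bimod_act F m η δ ε Z)) (heq_of_eq rfl)) ?_
    intro X Y f
    apply Subtype.ext
    simp [aux_eqToHom_val, aux_bimod_comp_val, PsiFunctor, forgetToCComod]
    erw [aux_eqToHom_val, aux_eqToHom_val]; simp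

end
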